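/- Let P be a row-stochastic N×N real matrix with stationary distribution w, and let ϖ be any probability row vector. Then for every n ≥ 0, ‖ϖᵀPⁿ − wᵀ‖₁ ≤ τ₁(P)ⁿ · ‖ϖ − w‖₁. -/
import Mathlib

/-- Coefficient of ergodicity τ₁ of a row-stochastic matrix. -/
noncomputable def tau1 {N : ℕ} (P : Matrix (Fin N) (Fin N) ℝ) : ℝ :=
  (1 / 2) * ⨆ i, ⨆ j, ∑ k, |P i k - P j k|

lemma row_diff_le_tau1 {N : ℕ} (P : Matrix (Fin N) (Fin N) ℝ) (i j : Fin N) :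
    ∑ k, |P i k - P j k| ≤ 2 * tau1 P := by
  have h1 : ∑ k, |P i k - P j k| ≤ ⨆ j', ∑ k, |P i k - P j' k| :=
    le_ciSup (f := fun j' => ∑ k, |P i k - P j' k|)
      (Set.Finite.bddAbove (Set.finite_range _)) j
  have h2 : (⨆ j', ∑ k, |P i k - P j' k|) ≤ ⨆ i', ⨆ j', ∑ k, |P i' k - P j' k| :=
    le_ciSup (f := fun i' => ⨆ j', ∑ k, |P i' k - P j' k|)
      (Set.Finite.bddAbove (Set.finite_range _)) i
  unfold tau1; linarith

lemma tau1_nonneg {N : ℕ} [NeZero N] (P : Matrix (Fin N) (Fin N) ℝ) :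
    0 ≤ tau1 P := by
  have i0 : Fin N := ⟨0, Nat.pos_of_ne_zero (NeZero.ne N)⟩
  have h := row_diff_le_tau1 P i0 i0
  have h0 : (0:ℝ) ≤ ∑ k, |P i0 k - P i0 k| :=
    Finset.sum_nonneg fun k _ => abs_nonneg _
  linarith

lemma contraction_step {N : ℕ} [NeZero N] (P : Matrix (Fin N) (Fin N) ℝ)
    (v : Fin N → ℝ) (hv : ∑ i, v i = 0) :
    ∑ j, |∑ i, v i * P i j| ≤ tau1 P * ∑ i, |v i| := by
  set a : Fin N → ℝ := fun i => max (v i) 0 with ha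
  set b : Fin N → ℝ := fun i => max (-v i) 0 with hb
  have hab : ∀ i, v i = a i - b i := by
    intro i; rcases le_total 0 (v i) with h | h
    · simp only [ha, hb, max_eq_left h, max_eq_right (neg_nonpos.mpr h)]; ring
    · simp only [ha, hb, max_eq_right h, max_eq_left (neg_nonneg.mpr h)]; ring
  have habs : ∀ i, |v i| = a i + b i := by
    intro i; rcases le_total 0 (v i) with h | h
    · simp only [ha, hb, max_eq_left h, max_eq_right (neg_nonpos.mpr h), abs_of_nonneg h]; ring
    · simp only [ha, hb, max_eq_right h, max_eq_left (neg_nonneg.mpr h), abs_of_nonpos h]; ring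
  have hann : ∀ i, 0 ≤ a i := fun i => le_max_right _ _
  have hbnn : ∀ i, 0 ≤ b i := fun i => le_max_right _ _
  set s : ℝ := ∑ i, a i with hs
  have hsb : ∑ i, b i = s := by
    have h0 : ∑ i, (a i - b i) = ∑ i, v i :=
      Finset.sum_congr rfl fun i _ => (hab i).symm
    rw [Finset.sum_sub_distrib, hv] at h0; linarith
  have hsnn : 0 ≤ s := Finset.sum_nonneg fun i _ => hann i
  have habs_sum : ∑ i, |v i| = 2 * s := by
    rw [Finset.sum_congr rfl fun i _ => habs i, Finset.sum_add_distrib, hsb]; ring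
  rcases eq_or_lt_of_le hsnn with hs0 | hs0
  · have hva : ∀ i, a i = 0 := fun i =>
      (Finset.sum_eq_zero_iff_of_nonneg (fun i _ => hann i)).mp hs0.symm i (Finset.mem_univ i)
    have hvb : ∀ i, b i = 0 := fun i =>
      (Finset.sum_eq_zero_iff_of_nonneg (fun i _ => hbnn i)).mp
        (by rw [hsb]; exact hs0.symm) i (Finset.mem_univ i)
    have hv0 : ∀ i, v i = 0 := fun i => by rw [hab i, hva i, hvb i]; ring
    simp [hv0]
  · have key : ∀ j, s * (∑ i, v i * P i j) = ∑ i, ∑ k, a i * b k * (P i j - P k j) := by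
      intro j
      have e1 : ∑ i, ∑ k, a i * b k * P i j = s * ∑ i, a i * P i j := by
        rw [Finset.mul_sum]
        refine Finset.sum_congr rfl fun i _ => ?_
        rw [← hsb, Finset.sum_mul]
        exact Finset.sum_congr rfl fun k _ => by ring
      have e2 : ∑ i, ∑ k, a i * b k * P k j = s * ∑ k, b k * P k j := by
        have h' : ∀ i, ∑ k, a i * b k * P k j = a i * ∑ k, b k * P k j := by
          intro i; rw [Finset.mul_sum]; exact Finset.sum_congr rfl fun k _ => by ring
        rw [Finset.sum_congr rfl fun i _ => h' i, ← Finset.sum_mul]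
      have e3 : ∑ i, ∑ k, a i * b k * (P i j - P k j)
          = (∑ i, ∑ k, a i * b k * P i j) - ∑ i, ∑ k, a i * b k * P k j := by
        rw [← Finset.sum_sub_distrib]
        refine Finset.sum_congr rfl fun i _ => ?_
        rw [← Finset.sum_sub_distrib]
        exact Finset.sum_congr rfl fun k _ => by ring
      have e4 : ∑ i, v i * P i j = (∑ i, a i * P i j) - ∑ i, b i * P i j := by
        rw [← Finset.sum_sub_distrib]
        exact Finset.sum_congr rfl fun i _ => by rw [hab i]; ring
      rw [e3, e1, e2, e4]; ring
    have main : s * ∑ j, |∑ i, v i * P i j| ≤ s * (tau1 P * ∑ i, |v i|) := by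
      have l1 : s * ∑ j, |∑ i, v i * P i j| = ∑ j, |s * ∑ i, v i * P i j| := by
        rw [Finset.mul_sum]
        exact Finset.sum_congr rfl fun j _ => by
          rw [abs_mul, abs_of_nonneg hsnn]
      rw [l1]
      have l2 : ∀ j, |s * ∑ i, v i * P i j| ≤ ∑ i, ∑ k, a i * b k * |P i j - P k j| := by
        intro j
        rw [key j]
        calc |∑ i, ∑ k, a i * b k * (P i j - P k j)|
            ≤ ∑ i, |∑ k, a i * b k * (P i j - P k j)| := Finset.abs_sum_le_sum_abs _ _
          _ ≤ ∑ i, ∑ k, a i * b k * |P i j - P k j| := by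
              refine Finset.sum_le_sum fun i _ => ?_
              calc |∑ k, a i * b k * (P i j - P k j)|
                  ≤ ∑ k, |a i * b k * (P i j - P k j)| := Finset.abs_sum_le_sum_abs _ _
                _ = ∑ k, a i * b k * |P i j - P k j| := by
                    refine Finset.sum_congr rfl fun k _ => ?_
                    rw [abs_mul, abs_mul, abs_of_nonneg (hann i), abs_of_nonneg (hbnn k)]
      calc ∑ j, |s * ∑ i, v i * P i j|
          ≤ ∑ j, ∑ i, ∑ k, a i * b k * |P i j - P k j| := Finset.sum_le_sum fun j _ => l2 j
        _ = ∑ i, ∑ k, a i * b k * ∑ j, |P i j - P k j| := by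
            rw [Finset.sum_comm]
            refine Finset.sum_congr rfl fun i _ => ?_
            rw [Finset.sum_comm]
            refine Finset.sum_congr rfl fun k _ => ?_
            rw [Finset.mul_sum]
        _ ≤ ∑ i, ∑ k, a i * b k * (2 * tau1 P) := by
            refine Finset.sum_le_sum fun i _ => Finset.sum_le_sum fun k _ => ?_
            exact mul_le_mul_of_nonneg_left (row_diff_le_tau1 P i k)
              (mul_nonneg (hann i) (hbnn k))
        _ = s * (tau1 P * ∑ i, |v i|) := by
            have e : ∀ i, ∑ k, a i * b k * (2 * tau1 P) = a i * (2 * tau1 P) * s := by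
              intro i
              rw [← hsb, Finset.mul_sum]
              exact Finset.sum_congr rfl fun k _ => by ring
            rw [Finset.sum_congr rfl fun i _ => e i, ← Finset.sum_mul, ← Finset.sum_mul,
              ← hs, habs_sum]
            ring
    exact le_of_mul_le_mul_left main hs0

lemma pow_rowsum {N : ℕ} (P : Matrix (Fin N) (Fin N) ℝ)
    (hProw : ∀ i, ∑ j, P i j = 1) : ∀ n i, ∑ j, (P ^ n) i j = 1 := by
  intro n
  induction n with
  | zero => intro i; simp [Matrix.one_apply]
  | succ n ih =>
    intro i
    simp only [pow_succ, Matrix.mul_apply]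
    rw [Finset.sum_comm]
    simp_rw [← Finset.mul_sum, hProw, mul_one]
    exact ih i

/-- Geometric convergence to the stationary distribution:
`‖ϖᵀPⁿ − wᵀ‖₁ ≤ τ₁(P)ⁿ · ‖ϖ − w‖₁`. -/
theorem power_contraction {N : ℕ} [NeZero N]
    (P : Matrix (Fin N) (Fin N) ℝ)
    (hPnn : ∀ i j, 0 ≤ P i j) (hProw : ∀ i, ∑ j, P i j = 1)
    (w : Fin N → ℝ) (hwnn : ∀ i, 0 ≤ w i) (hwsum : ∑ i, w i = 1)
    (hwstat : ∀ j, ∑ i, w i * P i j = w j)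
    (ϖ : Fin N → ℝ) (hϖnn : ∀ i, 0 ≤ ϖ i) (hϖsum : ∑ i, ϖ i = 1)
    (n : ℕ) :
    ∑ j, |(∑ i, ϖ i * (P ^ n) i j) - w j| ≤ tau1 P ^ n * ∑ i, |ϖ i - w i| := by
  induction n with
  | zero =>
    simp only [pow_zero, Matrix.one_apply, mul_ite, mul_one, mul_zero,
      Finset.sum_ite_eq', Finset.mem_univ, if_true, one_mul]
    exact le_refl _
  | succ n ih =>
    set v : Fin N → ℝ := fun j => (∑ i, ϖ i * (P ^ n) i j) - w j with hvdef
    have hvsum : ∑ j, v j = 0 := by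
      simp only [hvdef, Finset.sum_sub_distrib, hwsum]
      rw [Finset.sum_comm]
      simp_rw [← Finset.mul_sum, pow_rowsum P hProw, mul_one, hϖsum]
      ring
    have hrew : ∀ j, (∑ i, ϖ i * (P ^ (n+1)) i j) - w j = ∑ k, v k * P k j := by
      intro j
      have h1 : ∑ i, ϖ i * (P ^ (n+1)) i j = ∑ k, (∑ i, ϖ i * (P ^ n) i k) * P k j := by
        simp_rw [pow_succ, Matrix.mul_apply, Finset.mul_sum]
        rw [Finset.sum_comm]
        refine Finset.sum_congr rfl fun k _ => ?_
        rw [Finset.sum_mul]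
        exact Finset.sum_congr rfl fun i _ => by ring
      rw [h1]
      simp only [hvdef, sub_mul, Finset.sum_sub_distrib, hwstat j]
    calc ∑ j, |(∑ i, ϖ i * (P ^ (n+1)) i j) - w j|
        = ∑ j, |∑ k, v k * P k j| := Finset.sum_congr rfl fun j _ => by rw [hrew j]
      _ ≤ tau1 P * ∑ k, |v k| := contraction_step P v hvsum
      _ ≤ tau1 P * (tau1 P ^ n * ∑ i, |ϖ i - w i|) :=
          mul_le_mul_of_nonneg_left ih (tau1_nonneg P)
      _ = tau1 P ^ (n + 1) * ∑ i, |ϖ i - w i| := by ring
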